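/- arXiv:2411.19165 — 4 statements merged into one kernel-verified Lean document; each statement's English description precedes it below -/
import Mathlib

section
/- Let m ≥ 1 be a natural number, −1 ≤ c₁ < c₂ ≤ 1, and 0 ≤ δ < 1. Define, for z ∈ ℂ with z ≠ 0, P̂(z) = z^m · T_m( (z + z⁻¹ − 2c₁)/((1−δ)(c₂−c₁)) − 1 ), where T_m is the degree-m Chebyshev polynomial of the first kind. Then |P̂(exp(i·arccos(c₂)))| ≥ (1/2) · exp(2·m·√δ) · |P̂(exp(iθ))| for every θ ∈ ℝ with cos θ ∈ [c₁, c₂ − δ(c₂−c₁)]. -/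
private lemma sinh_le_mul_cosh' {x : ℝ} (hx : 0 ≤ x) : Real.sinh x ≤ x * Real.cosh x := by
  have h : MonotoneOn (fun y : ℝ => y * Real.cosh y - Real.sinh y) (Set.Ici 0) := by
    apply monotoneOn_of_deriv_nonneg (convex_Ici 0)
    · exact ((continuous_id.mul Real.continuous_cosh).sub Real.continuous_sinh).continuousOn
    · intro y hy
      exact (((hasDerivAt_id y).mul (Real.hasDerivAt_cosh y)).sub
        (Real.hasDerivAt_sinh y)).differentiableAt.differentiableWithinAt
    · intro y hy
      rw [interior_Ici, Set.mem_Ioi] at hy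
      have hd : HasDerivAt (fun y : ℝ => y * Real.cosh y - Real.sinh y)
          (y * Real.sinh y) y := by
        have := (((hasDerivAt_id y).mul (Real.hasDerivAt_cosh y)).sub (Real.hasDerivAt_sinh y))
        exact this.congr_deriv (by simp only [id, one_mul]; ring)
      rw [hd.deriv]
      exact mul_nonneg hy.le (Real.sinh_nonneg_iff.2 hy.le)
  have h0 := h (Set.self_mem_Ici) (Set.mem_Ici.2 hx) hx
  simp at h0
  linarith

private lemma cosh_exists' {y : ℝ} (hy : 1 ≤ y) : ∃ t : ℝ, 0 ≤ t ∧ Real.cosh t = y := by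
  set u := Real.sqrt (y ^ 2 - 1) with hu
  have hu2 : u ^ 2 = y ^ 2 - 1 := Real.sq_sqrt (by nlinarith)
  have hunn : 0 ≤ u := Real.sqrt_nonneg _
  set s := y + u with hs
  have hs1 : 1 ≤ s := by linarith
  have hspos : 0 < s := by linarith
  refine ⟨Real.log s, Real.log_nonneg hs1, ?_⟩
  have hinv : Real.exp (-Real.log s) = y - u := by
    rw [Real.exp_neg, Real.exp_log hspos]
    rw [inv_eq_iff_eq_inv, eq_comm, inv_eq_iff_eq_inv, eq_comm]
    · field_simp
      nlinarith
  rw [Real.cosh_eq, Real.exp_log hspos, hinv]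
  ring

private lemma cosh_two_sqrt_le' {δ : ℝ} (hδ0 : 0 ≤ δ) (hδ1 : δ < 1) :
    Real.cosh (2 * Real.sqrt δ) ≤ (1 + δ) / (1 - δ) := by
  set s := Real.sqrt δ with hsdef
  have hs2 : s ^ 2 = δ := Real.sq_sqrt hδ0
  have hsnn : 0 ≤ s := Real.sqrt_nonneg _
  have hs1 : s < 1 := by nlinarith [Real.sq_sqrt hδ0]
  have h1 : Real.sinh s ≤ s * Real.cosh s := sinh_le_mul_cosh' hsnn
  have hsh : 0 ≤ Real.sinh s := Real.sinh_nonneg_iff.2 hsnn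
  have hcsq : Real.cosh s ^ 2 = Real.sinh s ^ 2 + 1 := Real.cosh_sq s
  have key : Real.sinh s ^ 2 * (1 - s ^ 2) ≤ s ^ 2 := by nlinarith
  have h2m : Real.cosh (2 * s) = 1 + 2 * Real.sinh s ^ 2 := by
    rw [Real.cosh_two_mul]; nlinarith
  rw [le_div_iff₀ (by linarith), h2m]
  nlinarith

private lemma T_real_cosh' (t : ℝ) (n : ℤ) :
    (Polynomial.Chebyshev.T ℝ n).eval (Real.cosh t) = Real.cosh (n * t) := by
  have h := Polynomial.Chebyshev.T_complex_cos ((t : ℂ) * Complex.I) n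
  rw [Complex.cos_mul_I] at h
  have h2 : (Complex.ofReal (Real.cosh t)) = Complex.cosh t := Complex.ofReal_cosh t
  rw [← h2] at h
  rw [← Polynomial.Chebyshev.complex_ofReal_eval_T] at h
  have h3 : (n : ℂ) * ((t : ℂ) * Complex.I) = ((n * t : ℝ) : ℂ) * Complex.I := by push_cast; ring
  rw [h3, Complex.cos_mul_I, ← Complex.ofReal_cosh] at h
  exact_mod_cast h

/-- The polynomial-type function `P̂(z) = z^m · T_m((z + z⁻¹ − 2c₁)/((1−δ)(c₂−c₁)) − 1)`,
where `T_m` is the degree-`m` Chebyshev polynomial of the first kind. -/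
noncomputable def Phat (m : ℕ) (c₁ c₂ δ : ℝ) (z : ℂ) : ℂ :=
  z ^ m * (Polynomial.Chebyshev.T ℂ m).eval
    ((z + z⁻¹ - 2 * (c₁ : ℂ)) / ((1 - (δ : ℂ)) * ((c₂ : ℂ) - (c₁ : ℂ))) - 1)

private lemma phat_abs (m : ℕ) (c₁ c₂ δ : ℝ) (φ : ℝ) :
    ‖Phat m c₁ c₂ δ (Complex.exp ((φ : ℂ) * Complex.I))‖ =
      |(Polynomial.Chebyshev.T ℝ m).eval
        ((2 * Real.cos φ - 2 * c₁) / ((1 - δ) * (c₂ - c₁)) - 1)| := by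
  unfold Phat
  have hz : Complex.exp ((φ : ℂ) * Complex.I) + (Complex.exp ((φ : ℂ) * Complex.I))⁻¹
      = 2 * ((Real.cos φ : ℝ) : ℂ) := by
    rw [← Complex.exp_neg, Complex.ofReal_cos, ← neg_mul]
    exact (Complex.two_cos (φ : ℂ)).symm
  rw [hz]
  have harg : (2 * ((Real.cos φ : ℝ) : ℂ) - 2 * (c₁ : ℂ)) /
        ((1 - (δ : ℂ)) * ((c₂ : ℂ) - (c₁ : ℂ))) - 1
      = (((2 * Real.cos φ - 2 * c₁) / ((1 - δ) * (c₂ - c₁)) - 1 : ℝ) : ℂ) := by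
    push_cast; ring
  rw [harg, ← Polynomial.Chebyshev.complex_ofReal_eval_T]
  rw [norm_mul, norm_pow, Complex.norm_exp, Complex.norm_real]
  simp

/-- For `m ≥ 1`, `−1 ≤ c₁ < c₂ ≤ 1` and `0 ≤ δ < 1`, the function `P̂`
satisfies `|P̂(e^{i·arccos c₂})| ≥ (1/2)·exp(2m√δ)·|P̂(e^{iθ})|` for every `θ` with
`cos θ ∈ [c₁, c₂ − δ(c₂−c₁)]`. -/
theorem circle_poly_remez (m : ℕ) (hm : 1 ≤ m) (c₁ c₂ : ℝ) (hc₁ : -1 ≤ c₁) (hc : c₁ < c₂)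
    (hc₂ : c₂ ≤ 1) (δ : ℝ) (hδ0 : 0 ≤ δ) (hδ1 : δ < 1) (θ : ℝ)
    (hθ : Real.cos θ ∈ Set.Icc c₁ (c₂ - δ * (c₂ - c₁))) :
    (1 / 2) * Real.exp (2 * m * Real.sqrt δ) *
        ‖Phat m c₁ c₂ δ (Complex.exp (θ * Complex.I))‖ ≤
      ‖Phat m c₁ c₂ δ (Complex.exp ((Real.arccos c₂ : ℂ) * Complex.I))‖ := by
  obtain ⟨hθ1, hθ2⟩ := hθ
  have hd : (0 : ℝ) < (1 - δ) * (c₂ - c₁) := by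
    apply mul_pos <;> linarith
  rw [phat_abs m c₁ c₂ δ θ, phat_abs m c₁ c₂ δ (Real.arccos c₂)]
  -- the value at θ
  set x := (2 * Real.cos θ - 2 * c₁) / ((1 - δ) * (c₂ - c₁)) - 1 with hxdef
  have hx1 : -1 ≤ x := by
    rw [hxdef]
    have : 0 ≤ (2 * Real.cos θ - 2 * c₁) / ((1 - δ) * (c₂ - c₁)) :=
      div_nonneg (by linarith) hd.le
    linarith
  have hx2 : x ≤ 1 := by
    rw [hxdef]
    have h1 : 2 * Real.cos θ - 2 * c₁ ≤ 2 * ((1 - δ) * (c₂ - c₁)) := by nlinarith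
    have := (div_le_iff₀ hd).2 h1
    linarith [(div_le_iff₀ hd).2 h1]
  have hTθ : |(Polynomial.Chebyshev.T ℝ m).eval x| ≤ 1 := by
    have hxcos : Real.cos (Real.arccos x) = x := Real.cos_arccos hx1 hx2
    rw [← hxcos, Polynomial.Chebyshev.T_real_cos]
    exact Real.abs_cos_le_one _
  -- the value at arccos c₂
  have hcos₂ : Real.cos (Real.arccos c₂) = c₂ := Real.cos_arccos (by linarith) hc₂
  set y := (1 + δ) / (1 - δ) with hydef
  have hxstar : (2 * Real.cos (Real.arccos c₂) - 2 * c₁) / ((1 - δ) * (c₂ - c₁)) - 1 = y := by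
    rw [hcos₂, hydef]
    have h1 : (1 : ℝ) - δ ≠ 0 := by linarith
    have h2 : c₂ - c₁ ≠ 0 := by linarith
    field_simp
    ring
  have hy1 : 1 ≤ y := by
    rw [hydef, le_div_iff₀ (by linarith)]
    linarith
  obtain ⟨t, ht0, hcosht⟩ := cosh_exists' hy1
  -- 2√δ ≤ t
  have hst : 2 * Real.sqrt δ ≤ t := by
    have h1 : Real.cosh (2 * Real.sqrt δ) ≤ Real.cosh t := by
      rw [hcosht]; exact cosh_two_sqrt_le' hδ0 hδ1
    have h2 := Real.cosh_le_cosh.1 h1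
    rwa [abs_of_nonneg (by positivity), abs_of_nonneg ht0] at h2
  -- rewrite both sides
  rw [hxstar, ← hcosht, T_real_cosh']
  have hmt : Real.cosh ((m : ℤ) * t) = Real.cosh ((m : ℝ) * t) := by push_cast; ring_nf
  rw [hmt]
  -- final chain
  have hchain1 : (1 / 2 : ℝ) * Real.exp (2 * m * Real.sqrt δ) *
      |(Polynomial.Chebyshev.T ℝ m).eval x| ≤
      (1 / 2) * Real.exp (2 * m * Real.sqrt δ) := by
    have hpos : (0 : ℝ) < (1 / 2) * Real.exp (2 * m * Real.sqrt δ) := by positivity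
    nlinarith [abs_nonneg ((Polynomial.Chebyshev.T ℝ m).eval x)]
  have hchain2 : (1 / 2 : ℝ) * Real.exp (2 * m * Real.sqrt δ) ≤
      Real.cosh (2 * m * Real.sqrt δ) := by
    rw [Real.cosh_eq]
    have := (Real.exp_pos (-(2 * m * Real.sqrt δ))).le
    linarith
  have hchain3 : Real.cosh (2 * m * Real.sqrt δ) ≤ Real.cosh ((m : ℝ) * t) := by
    rw [Real.cosh_le_cosh]
    have hm0 : (0 : ℝ) ≤ (m : ℝ) := Nat.cast_nonneg m
    rw [abs_of_nonneg (by positivity), abs_of_nonneg (mul_nonneg hm0 ht0)]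
    nlinarith
  have := le_abs_self (Real.cosh ((m : ℝ) * t))
  linarith
end

section
/- Let 0 < δ < 1 and define P(z) = (1 − δ/4)z² + (1 − δ/8)z + 1. Then P maps the half annulus D_δ = { z ∈ ℂ : δ ≤ |z| ≤ 1, Re(z) ≤ 0 } into the set R_ε with ε = (2/3)δ, where R_ε = { z ∈ ℂ : |z| ≤ 1 and ε ≤ |arg(z)| ≤ π − ε } ∪ { z ∈ ℂ : |z| ≤ 1 − ε/8 }; here arg(z) ∈ (−π, π] is the principal argument. That is, P(D_δ) ⊆ R_{(2/3)δ}. -/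
open Real

/-- The quadratic `P(z) = (1 − δ/4)z² + (1 − δ/8)z + 1`. -/
noncomputable def Pquad (δ : ℝ) (z : ℂ) : ℂ :=
  (1 - (δ : ℂ) / 4) * z ^ 2 + (1 - (δ : ℂ) / 8) * z + 1

lemma le_of_sq_le_sq'' (A B : ℝ) (hA : 0 ≤ A) (hB : 0 ≤ B) (h : A^2 ≤ B^2) : A ≤ B := by
  nlinarith

set_option maxHeartbeats 1000000 in
lemma lemA (s x y : ℝ) (hs0 : 0 ≤ s) (hs1 : s ≤ 1) (hx : x ≤ 0) (hq : x^2 + y^2 ≤ 1) :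
    ((1-s/4)*(x^2-y^2)+(1-s/8)*x+1)^2 + (y*(2*(1-s/4)*x+(1-s/8)))^2 ≤ 1 := by
  have hx2 : x^2 ≤ 1 := by nlinarith [sq_nonneg y]
  have ht1 : -x ≤ 1 := by nlinarith
  have ht0 : (0:ℝ) ≤ -x := by linarith
  have hc : (0:ℝ) ≤ s/4 - 5*s^2/64 := by nlinarith
  have hab : (0:ℝ) ≤ (1-s/4)*(1-s/8) := by nlinarith
  have hq0 : (0:ℝ) ≤ x^2+y^2 := by positivity
  have h1 : 0 ≤ (1-s/4)^2*((x^2+y^2)*(1-(x^2+y^2))) :=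
    mul_nonneg (sq_nonneg _) (mul_nonneg hq0 (by linarith))
  have h2 : 0 ≤ y^2*((s/4-5*s^2/64) + 2*((1-s/4)*(1-s/8))*(-x)) :=
    mul_nonneg (sq_nonneg y) (by nlinarith [mul_nonneg hab ht0])
  have h3 : 0 ≤ (-x)*(s/4-s^2/64) := mul_nonneg ht0 (by nlinarith)
  have h4 : 0 ≤ ((-x)*(1-(-x)))*(s/4-3*s^2/64) :=
    mul_nonneg (mul_nonneg ht0 (by linarith)) (by nlinarith)
  have h5 : 0 ≤ (2*((1-s/4)*(1-s/8)))*((-x)*(1-(-x))^2) :=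
    mul_nonneg (by linarith) (mul_nonneg ht0 (sq_nonneg _))
  have key : 1 - (((1-s/4)*(x^2-y^2)+(1-s/8)*x+1)^2 + (y*(2*(1-s/4)*x+(1-s/8)))^2) =
      (1-s/4)^2*((x^2+y^2)*(1-(x^2+y^2)))
      + y^2*((s/4-5*s^2/64) + 2*((1-s/4)*(1-s/8))*(-x))
      + (-x)*(s/4-s^2/64)
      + ((-x)*(1-(-x)))*(s/4-3*s^2/64)
      + (2*((1-s/4)*(1-s/8)))*((-x)*(1-(-x))^2) := by ring
  linarith [h1, h2, h3, h4, h5, key]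

lemma sq_le_bound (m : ℝ) (h0 : 0 ≤ m) (h : m^2 ≤ 64/135) : m ≤ 69/100 := by
  nlinarith

lemma hfin_aux (s : ℝ) (hs0 : 0 < s) (hs1 : s < 1) :
    s/6 - s^2/144 ≤ (s/4-5*s^2/64)*s^2 + (31/100 - s/8)*(1-5*s/8) := by
  nlinarith [sq_nonneg s, sq_nonneg (1-s), mul_pos hs0 hs0,
    mul_nonneg (mul_nonneg hs0.le hs0.le) hs0.le,
    mul_nonneg (mul_nonneg hs0.le hs0.le) (by linarith : (0:ℝ) ≤ 1-s)]

lemma lemB1 (s t : ℝ) (hs0 : 0 < s) (hs1 : s < 1) (ht1 : 1/3 ≤ t) (ht2 : t ≤ 1) :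
    s/6 - s^2/144 ≤ t*(s/4 - s^2/64) + 2*((1-s/4)*(1-s/8))*(t*(1-t)^2) := by
  nlinarith [mul_nonneg (sub_nonneg.2 ht2) (sq_nonneg (1-t)), sq_nonneg (1-t),
    mul_nonneg hs0.le (sub_nonneg.2 ht2), sq_nonneg (s*(1-t)), sq_nonneg (s - t),
    mul_nonneg (mul_nonneg hs0.le hs0.le) (sub_nonneg.2 ht2),
    mul_nonneg (sub_nonneg.2 ht1) (sq_nonneg (1-t)),
    mul_nonneg (mul_nonneg hs0.le (sub_nonneg.2 ht1)) (sq_nonneg (1-t)),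
    sq_nonneg (1 - t - s/4)]

set_option maxHeartbeats 1000000 in
lemma lemB (s x y : ℝ) (hs0 : 0 < s) (hs1 : s < 1) (hx : x ≤ 0)
    (hq1 : s^2 ≤ x^2 + y^2) (hq2 : x^2 + y^2 ≤ 1)
    (hIm : (y*(2*(1-s/4)*x+(1-s/8)))^2 ≤ (2*s/3)^2) :
    ((1-s/4)*(x^2-y^2)+(1-s/8)*x+1)^2 + (y*(2*(1-s/4)*x+(1-s/8)))^2 ≤ (1-s/12)^2 := by
  have hx2 : x^2 ≤ 1 := by nlinarith [sq_nonneg y]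
  have ht1 : -x ≤ 1 := by nlinarith
  have ht0 : (0:ℝ) ≤ -x := by linarith
  have hq0 : (0:ℝ) ≤ x^2+y^2 := by positivity
  have hc : (0:ℝ) ≤ s/4 - 5*s^2/64 := by nlinarith
  have hab : (0:ℝ) ≤ (1-s/4)*(1-s/8) := by nlinarith
  have hgoal : (1-s/12)^2 = 1 - (s/6 - s^2/144) := by ring
  rcases le_or_gt (1/3 : ℝ) (-x) with hcase | hcase
  · -- t ≥ 1/3 : use lemA-style decomposition + lemB1
    have h1 : 0 ≤ (1-s/4)^2*((x^2+y^2)*(1-(x^2+y^2))) :=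
      mul_nonneg (sq_nonneg _) (mul_nonneg hq0 (by linarith))
    have h2 : 0 ≤ y^2*((s/4-5*s^2/64) + 2*((1-s/4)*(1-s/8))*(-x)) :=
      mul_nonneg (sq_nonneg y) (by nlinarith [mul_nonneg hab ht0])
    have h4 : 0 ≤ ((-x)*(1-(-x)))*(s/4-3*s^2/64) :=
      mul_nonneg (mul_nonneg ht0 (by linarith)) (by nlinarith)
    have hb1 := lemB1 s (-x) hs0 hs1 hcase ht1
    have key : 1 - (((1-s/4)*(x^2-y^2)+(1-s/8)*x+1)^2 + (y*(2*(1-s/4)*x+(1-s/8)))^2) =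
        (1-s/4)^2*((x^2+y^2)*(1-(x^2+y^2)))
        + y^2*((s/4-5*s^2/64) + 2*((1-s/4)*(1-s/8))*(-x))
        + ((-x)*(1-(-x)))*(s/4-3*s^2/64)
        + ((-x)*(s/4 - s^2/64) + 2*((1-s/4)*(1-s/8))*((-x)*(1-(-x))^2)) := by ring
    linarith [h1, h2, h4, hb1, key]
  · -- t < 1/3 : second decomposition
    have key : 1 - (((1-s/4)*(x^2-y^2)+(1-s/8)*x+1)^2 + (y*(2*(1-s/4)*x+(1-s/8)))^2) =
        (s/4-5*s^2/64)*(x^2+y^2)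
        + (1-s/4)^2*((x^2+y^2)*(1-(x^2+y^2)))
        + 2*((1-s/4)*(1-s/8))*((-x)*(x^2+y^2))
        + 2*((-x)*(2*(1-s/4)*x+(1-s/8))) := by ring
    have h1 : 0 ≤ (s/4-5*s^2/64)*(x^2+y^2) := mul_nonneg hc hq0
    have h2 : 0 ≤ (1-s/4)^2*((x^2+y^2)*(1-(x^2+y^2))) :=
      mul_nonneg (sq_nonneg _) (mul_nonneg hq0 (by linarith))
    have h3 : 0 ≤ 2*((1-s/4)*(1-s/8))*((-x)*(x^2+y^2)) := by
      have := mul_nonneg ht0 hq0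
      nlinarith [mul_nonneg hab this]
    rcases le_or_gt (s/4) (-x) with hcase2 | hcase2
    · -- t ≥ s/4
      have hm : 1/3 + s/24 ≤ 2*(1-s/4)*x+(1-s/8) := by
        nlinarith [mul_nonneg (by linarith : (0:ℝ) ≤ 1-s/4) (by linarith : (0:ℝ) ≤ x + 1/3)]
      have h4 : s/6 + s^2/48 ≤ 2*((-x)*(2*(1-s/4)*x+(1-s/8))) := by
        nlinarith [mul_nonneg (by linarith : (0:ℝ) ≤ -x - s/4)
          (by linarith : (0:ℝ) ≤ (2*(1-s/4)*x+(1-s/8)) - (1/3+s/24)),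
          mul_nonneg hs0.le (by linarith : (0:ℝ) ≤ (2*(1-s/4)*x+(1-s/8)) - (1/3+s/24)),
          mul_nonneg (by linarith : (0:ℝ) ≤ -x - s/4) hs0.le]
      linarith [h1, h2, h3, h4, key, sq_nonneg s]
    · -- t < s/4
      have hm_low : 1 - 5*s/8 ≤ 2*(1-s/4)*x+(1-s/8) := by
        nlinarith [mul_nonneg (by linarith : (0:ℝ) ≤ 1-s/4) (by linarith : (0:ℝ) ≤ x + s/4)]
      have hm0 : (0:ℝ) ≤ 2*(1-s/4)*x+(1-s/8) := by linarith
      have key1 : (s^2 - x^2)*(2*(1-s/4)*x+(1-s/8))^2 ≤ 4*s^2/9 := by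
        have h := mul_le_mul_of_nonneg_right (by linarith : s^2 - x^2 ≤ y^2)
          (sq_nonneg (2*(1-s/4)*x+(1-s/8)))
        linarith [hIm, h]
      have key2 : 2*(1-s/4)*x+(1-s/8) ≤ 69/100 := by
        have hxs : x^2 ≤ s^2/16 := by nlinarith [mul_nonneg ht0 (by linarith : (0:ℝ) ≤ s/4 + x)]
        have hprod := mul_le_mul_of_nonneg_right
            (by linarith : 15*s^2/16 ≤ s^2 - x^2) (sq_nonneg (2*(1-s/4)*x+(1-s/8)))
        have hm2 : s^2*((2*(1-s/4)*x+(1-s/8))^2) ≤ s^2*(64/135) := by linarith [hprod, key1]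
        have hm3 : (2*(1-s/4)*x+(1-s/8))^2 ≤ 64/135 :=
          le_of_mul_le_mul_left hm2 (by positivity : (0:ℝ) < s^2)
        exact sq_le_bound _ hm0 hm3
      have hsx : 0 ≤ s*(-x) := mul_nonneg hs0.le ht0
      have ht_low : (31/100 - s/8)/2 ≤ -x := by linarith [key2, hsx]
      have h4 : ((31/100 - s/8)/2)*(1-5*s/8) ≤ (-x)*(2*(1-s/4)*x+(1-s/8)) :=
        mul_le_mul ht_low hm_low (by linarith) (by linarith)
      have h1' : (s/4-5*s^2/64)*s^2 ≤ (s/4-5*s^2/64)*(x^2+y^2) :=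
        mul_le_mul_of_nonneg_left hq1 hc
      have hfin := hfin_aux s hs0 hs1
      linarith [h1, h2, h3, h4, key, h1', hfin]


/-- For `0 < δ < 1`, the quadratic `P` maps the half annulus
`D_δ = {z : δ ≤ |z| ≤ 1, Re z ≤ 0}` into
`R_ε = {z : |z| ≤ 1, ε ≤ |arg z| ≤ π − ε} ∪ {z : |z| ≤ 1 − ε/8}` with `ε = (2/3)δ`. -/
theorem quad_maps_halfannulus (δ : ℝ) (hδ0 : 0 < δ) (hδ1 : δ < 1) :
    ∀ z : ℂ, δ ≤ ‖z‖ → ‖z‖ ≤ 1 → z.re ≤ 0 →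
      (‖Pquad δ z‖ ≤ 1 ∧
        (2 / 3) * δ ≤ |Complex.arg (Pquad δ z)| ∧
        |Complex.arg (Pquad δ z)| ≤ π - (2 / 3) * δ) ∨
      ‖Pquad δ z‖ ≤ 1 - ((2 / 3) * δ) / 8 := by
  intro z hz1 hz2 hz3
  set x := z.re with hxdef
  set y := z.im with hydef
  have hre : (Pquad δ z).re = (1-δ/4)*(x^2-y^2)+(1-δ/8)*x+1 := by
    simp [Pquad, Complex.add_re, Complex.mul_re, Complex.mul_im, pow_two,
      Complex.ofReal_re, Complex.ofReal_im, Complex.div_ofNat_re, Complex.div_ofNat_im]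
    try ring
  have him : (Pquad δ z).im = y*(2*(1-δ/4)*x+(1-δ/8)) := by
    simp [Pquad, Complex.add_im, Complex.mul_re, Complex.mul_im, pow_two,
      Complex.ofReal_re, Complex.ofReal_im, Complex.div_ofNat_re, Complex.div_ofNat_im]
    try ring
  have habs2 : (‖z‖)^2 = x^2 + y^2 := by
    rw [Complex.sq_norm, Complex.normSq_apply]; ring
  have hq1 : δ^2 ≤ x^2 + y^2 := by
    rw [← habs2]; exact pow_le_pow_left₀ hδ0.le hz1 2
  have hq2 : x^2 + y^2 ≤ 1 := by
    rw [← habs2]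
    calc (‖z‖)^2 ≤ 1^2 := pow_le_pow_left₀ (norm_nonneg z) hz2 2
    _ = 1 := one_pow 2
  have hF : ((1-δ/4)*(x^2-y^2)+(1-δ/8)*x+1)^2 + (y*(2*(1-δ/4)*x+(1-δ/8)))^2 ≤ 1 :=
    lemA δ x y hδ0.le hδ1.le hz3 hq2
  have hPsq : (‖Pquad δ z‖)^2
      = ((1-δ/4)*(x^2-y^2)+(1-δ/8)*x+1)^2 + (y*(2*(1-δ/4)*x+(1-δ/8)))^2 := by
    rw [Complex.sq_norm, Complex.normSq_apply, hre, him]; ring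
  have habsP : ‖Pquad δ z‖ ≤ 1 := by
    have hA2 : (‖Pquad δ z‖)^2 ≤ (1:ℝ)^2 := by rw [hPsq, one_pow]; exact hF
    exact le_of_sq_le_sq'' _ _ (norm_nonneg _) one_pos.le hA2
  by_cases hbig : (2/3)*δ ≤ |(Pquad δ z).im|
  · left
    refine ⟨habsP, ?_, ?_⟩
    · -- lower bound on |arg|
      have hPne : Pquad δ z ≠ 0 := by
        intro h
        rw [h] at hbig
        simp at hbig
        linarith
      have hPpos : 0 < ‖Pquad δ z‖ := norm_pos_iff.mpr hPne
      have hsin : |Real.sin (Complex.arg (Pquad δ z))| = |(Pquad δ z).im| / ‖Pquad δ z‖ := by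
        rw [Complex.sin_arg, abs_div, abs_of_pos hPpos]
      have hsin2 : (2/3)*δ ≤ |Real.sin (Complex.arg (Pquad δ z))| := by
        rw [hsin]
        rw [le_div_iff₀ hPpos]
        calc (2/3)*δ * ‖Pquad δ z‖ ≤ (2/3)*δ * 1 := by
              apply mul_le_mul_of_nonneg_left habsP
              positivity
        _ = (2/3)*δ := mul_one _
        _ ≤ |(Pquad δ z).im| := hbig
      have habs_sin : |Real.sin (Complex.arg (Pquad δ z))| = Real.sin |Complex.arg (Pquad δ z)| := by
        rcases abs_cases (Complex.arg (Pquad δ z)) with ⟨h1, h2⟩ | ⟨h1, h2⟩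
        · rw [h1, abs_of_nonneg]
          exact Real.sin_nonneg_of_nonneg_of_le_pi h2 (Complex.arg_le_pi _)
        · have hsle : Real.sin (Complex.arg (Pquad δ z)) ≤ 0 := by
            have h3 : 0 ≤ Real.sin (-Complex.arg (Pquad δ z)) :=
              Real.sin_nonneg_of_nonneg_of_le_pi (by linarith)
                (by linarith [Complex.neg_pi_lt_arg (Pquad δ z)])
            rw [Real.sin_neg] at h3
            linarith
          rw [h1, Real.sin_neg, abs_of_nonpos hsle]
      have := Real.sin_le (abs_nonneg (Complex.arg (Pquad δ z)))
      rw [habs_sin] at hsin2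
      linarith
    · -- upper bound on |arg|
      have hPne : Pquad δ z ≠ 0 := by
        intro h
        rw [h] at hbig
        simp at hbig
        linarith
      have hPpos : 0 < ‖Pquad δ z‖ := norm_pos_iff.mpr hPne
      have hsin : |Real.sin (Complex.arg (Pquad δ z))| = |(Pquad δ z).im| / ‖Pquad δ z‖ := by
        rw [Complex.sin_arg, abs_div, abs_of_pos hPpos]
      have hsin2 : (2/3)*δ ≤ |Real.sin (Complex.arg (Pquad δ z))| := by
        rw [hsin, le_div_iff₀ hPpos]
        calc (2/3)*δ * ‖Pquad δ z‖ ≤ (2/3)*δ * 1 := by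
              apply mul_le_mul_of_nonneg_left habsP
              positivity
        _ = (2/3)*δ := mul_one _
        _ ≤ |(Pquad δ z).im| := hbig
      have habs_sin : |Real.sin (Complex.arg (Pquad δ z))| = Real.sin |Complex.arg (Pquad δ z)| := by
        rcases abs_cases (Complex.arg (Pquad δ z)) with ⟨h1, h2⟩ | ⟨h1, h2⟩
        · rw [h1, abs_of_nonneg]
          exact Real.sin_nonneg_of_nonneg_of_le_pi h2 (Complex.arg_le_pi _)
        · have hsle : Real.sin (Complex.arg (Pquad δ z)) ≤ 0 := by
            have h3 : 0 ≤ Real.sin (-Complex.arg (Pquad δ z)) :=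
              Real.sin_nonneg_of_nonneg_of_le_pi (by linarith)
                (by linarith [Complex.neg_pi_lt_arg (Pquad δ z)])
            rw [Real.sin_neg] at h3
            linarith
          rw [h1, Real.sin_neg, abs_of_nonpos hsle]
      rw [habs_sin] at hsin2
      have hsub : Real.sin (π - |Complex.arg (Pquad δ z)|) = Real.sin |Complex.arg (Pquad δ z)| :=
        Real.sin_pi_sub _
      have hsub2 : Real.sin (π - |Complex.arg (Pquad δ z)|) ≤ π - |Complex.arg (Pquad δ z)| :=
        Real.sin_le (by linarith [Complex.abs_arg_le_pi (Pquad δ z)])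
      linarith
  · right
    push_neg at hbig
    have hIm : (y*(2*(1-δ/4)*x+(1-δ/8)))^2 ≤ (2*δ/3)^2 := by
      have h1 : |(Pquad δ z).im|^2 ≤ ((2/3)*δ)^2 := by
        apply pow_le_pow_left₀ (abs_nonneg _) hbig.le
      rw [sq_abs, him] at h1
      calc (y*(2*(1-δ/4)*x+(1-δ/8)))^2 ≤ ((2/3)*δ)^2 := h1
      _ = (2*δ/3)^2 := by ring
    have hB := lemB δ x y hδ0 hδ1 hz3 hq1 hq2 hIm
    have hgoal : (1:ℝ) - ((2/3)*δ)/8 = 1 - δ/12 := by ring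
    rw [hgoal]
    have hA2 : (‖Pquad δ z‖)^2 ≤ (1-δ/12)^2 := by rw [hPsq]; exact hB
    exact le_of_sq_le_sq'' _ _ (norm_nonneg _) (by linarith) hA2
end

section
/- Let k and n be natural numbers with 1 ≤ k < n. Then ∑_{j=1}^{n} j^{k+1} < (n − 1/(e+1)) · ∑_{j=1}^{n} j^{k}, where e is Euler's number. -/
/-- For natural numbers `1 ≤ k < n`,
`∑_{j=1}^{n} j^{k+1} < (n − 1/(e+1)) · ∑_{j=1}^{n} j^{k}`. -/
theorem power_sum_lt (k n : ℕ) (hk : 1 ≤ k) (hkn : k < n) :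
    (∑ j ∈ Finset.Icc 1 n, (j : ℝ) ^ (k + 1)) <
      ((n : ℝ) - 1 / (Real.exp 1 + 1)) * ∑ j ∈ Finset.Icc 1 n, (j : ℝ) ^ k := by
  have hn2 : 2 ≤ n := by omega
  have hn1 : 1 ≤ n := by omega
  have he : (0:ℝ) < Real.exp 1 := Real.exp_pos 1
  set c : ℝ := 1 / (Real.exp 1 + 1) with hc
  set S : ℝ := ∑ j ∈ Finset.Icc 1 n, (j : ℝ) ^ k with hS
  set m : ℝ := (n : ℝ) - 1 with hm
  have hm0 : (1:ℝ) ≤ m := by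
    have : (2:ℝ) ≤ (n:ℝ) := by exact_mod_cast hn2
    simp [hm]; linarith
  have hmpos : (0:ℝ) < m := by linarith
  -- Step 1: T ≤ (n-1) * S + n^k
  have hT : (∑ j ∈ Finset.Icc 1 n, (j : ℝ) ^ (k + 1))
      ≤ m * S + (n:ℝ) ^ k := by
    have hrw : m * S + (n:ℝ) ^ k
        = ∑ j ∈ Finset.Icc 1 n,
            (m * (j:ℝ) ^ k + if j = n then (n:ℝ) ^ k else 0) := by
      rw [Finset.sum_add_distrib, ← Finset.mul_sum, Finset.sum_ite_eq']
      simp [hn1, hS]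
    rw [hrw]
    apply Finset.sum_le_sum
    intro j hj
    simp only [Finset.mem_Icc] at hj
    by_cases hje : j = n
    · subst hje
      simp only [if_pos rfl]
      have : ((j:ℝ)) ^ (k+1) = (j:ℝ) * (j:ℝ)^k := by ring
      rw [this, hm]; simp; exact le_of_eq (by ring)
    · have hjle : j ≤ n - 1 := by omega
      have hjr : (j:ℝ) ≤ m := by
        rw [hm]
        have : (j:ℝ) + 1 ≤ (n:ℝ) := by exact_mod_cast Nat.succ_le_of_lt (by omega)
        linarith
      simp only [if_neg hje, add_zero]
      have : ((j:ℝ)) ^ (k+1) = (j:ℝ) * (j:ℝ)^k := by ring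
      rw [this]
      have hpk : (0:ℝ) ≤ (j:ℝ)^k := by positivity
      exact mul_le_mul_of_nonneg_right hjr hpk
  -- Step 2: S ≥ n^k + (n-1)^k
  have hS2 : (n:ℝ) ^ k + m ^ k ≤ S := by
    have hsub : ({n - 1, n} : Finset ℕ) ⊆ Finset.Icc 1 n := by
      intro x hx
      simp only [Finset.mem_insert, Finset.mem_singleton] at hx
      simp only [Finset.mem_Icc]
      omega
    have hne : (n - 1 : ℕ) ≠ n := by omega
    have hcast : ((n - 1 : ℕ) : ℝ) = m := by
      rw [hm]
      push_cast [Nat.cast_sub hn1]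
      ring
    calc (n:ℝ) ^ k + m ^ k
        = ∑ j ∈ ({n - 1, n} : Finset ℕ), (j : ℝ) ^ k := by
          rw [Finset.sum_insert (by simpa using hne), Finset.sum_singleton, hcast]
          ring
      _ ≤ S := by
          apply Finset.sum_le_sum_of_subset_of_nonneg hsub
          intro i _ _
          positivity
  -- Step 3: n^k / e < m^k, i.e. n^k < e * m^k
  have hlow : (n:ℝ) ^ k < Real.exp 1 * m ^ k := by
    have hx : (1:ℝ)/m ≠ 0 := by positivity
    have h2 : (1:ℝ)/m + 1 < Real.exp (1/m) := Real.add_one_lt_exp hx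
    have hnm : (n:ℝ)/m = 1/m + 1 := by field_simp [hm]; rw [hm]; ring
    have h3 : ((n:ℝ)/m) ^ k < (Real.exp (1/m)) ^ k := by
      apply pow_lt_pow_left₀ _ (by positivity) (by omega)
      rw [hnm]; exact h2
    have h4 : (Real.exp (1/m)) ^ k = Real.exp ((k:ℝ)/m) := by
      rw [← Real.exp_nat_mul]
      ring_nf
    have h5 : Real.exp ((k:ℝ)/m) ≤ Real.exp 1 := by
      apply Real.exp_le_exp.mpr
      rw [div_le_one hmpos, hm]
      have : (k:ℝ) + 1 ≤ (n:ℝ) := by exact_mod_cast Nat.succ_le_of_lt hkn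
      linarith
    have h6 : ((n:ℝ)/m) ^ k < Real.exp 1 := by
      calc ((n:ℝ)/m) ^ k < (Real.exp (1/m)) ^ k := h3
        _ = Real.exp ((k:ℝ)/m) := h4
        _ ≤ Real.exp 1 := h5
    have h7 : (n:ℝ) ^ k = ((n:ℝ)/m) ^ k * m ^ k := by
      rw [← mul_pow, div_mul_cancel₀]
      exact ne_of_gt hmpos
    rw [h7]
    have hmk : (0:ℝ) < m ^ k := by positivity
    exact mul_lt_mul_of_pos_right h6 hmk
  -- Step 4: n^k < (1 - c) * S
  have hkey : (n:ℝ) ^ k < (1 - c) * S := by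
    have hep : (0:ℝ) < Real.exp 1 + 1 := by linarith
    have hc1 : c * (Real.exp 1 + 1) = 1 := by
      rw [hc]; field_simp
    have hc0 : 0 < c := by rw [hc]; positivity
    have hc2 : c < 1 := by
      rw [hc, div_lt_one hep]; linarith
    have hnk : (0:ℝ) < (n:ℝ)^k := by positivity
    nlinarith [mul_le_mul_of_nonneg_left hS2 (le_of_lt (sub_pos.mpr hc2)),
      mul_lt_mul_of_pos_left hlow (sub_pos.mpr hc2)]
  have hfinal : m * S + (1 - c) * S = ((n:ℝ) - c) * S := by
    rw [hm]; ring
  linarith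
end

section
/- Let m ≥ n ≥ 1, let V ∈ ℂ^{m×n} satisfy V*V = I_n, and let D ∈ ℂ^{m×m} be a diagonal matrix with ‖D‖₂ < 1. Let Q ∈ ℂ^{m×n} be the orthonormal polar factor of (I+D)V, i.e., Q*Q = I_n and QH = (I+D)V for some Hermitian positive semidefinite H ∈ ℂ^{n×n}. Then for every A ∈ ℂ^{m×m}, ‖V*AV − Q*AQ‖₂ ≤ 4‖A‖₂‖D‖₂ / (1 − ‖D‖₂). -/
open Matrix
open scoped ComplexOrder

/-- The spectral (ℓ² operator) norm of a complex matrix. -/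
noncomputable def specNorm {m n : ℕ} (M : Matrix (Fin m) (Fin n) ℂ) : ℝ :=
  ‖LinearMap.toContinuousLinearMap (Matrix.toEuclideanLin M)‖

open scoped Matrix.Norms.L2Operator

lemma specNorm_eq {a b : ℕ} (M : Matrix (Fin a) (Fin b) ℂ) : specNorm M = ‖M‖ := rfl

lemma opNorm_le_of {a b : ℕ} (M : Matrix (Fin a) (Fin b) ℂ) {c : ℝ} (hc : 0 ≤ c)
    (h : ∀ x : EuclideanSpace ℂ (Fin b), ‖Matrix.toEuclideanLin M x‖ ≤ c * ‖x‖) :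
    ‖M‖ ≤ c := by
  rw [Matrix.l2_opNorm_def]
  exact ContinuousLinearMap.opNorm_le_bound _ hc h

lemma le_opNorm_mulVec {a b : ℕ} (M : Matrix (Fin a) (Fin b) ℂ)
    (x : EuclideanSpace ℂ (Fin b)) : ‖Matrix.toEuclideanLin M x‖ ≤ ‖M‖ * ‖x‖ := by
  rw [Matrix.l2_opNorm_def]
  exact (LinearMap.toContinuousLinearMap (Matrix.toEuclideanLin M)).le_opNorm x

lemma diag_norm_le {k : ℕ} (d : Fin k → ℂ) {c : ℝ} (hc : 0 ≤ c) (h : ∀ i, ‖d i‖ ≤ c) :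
    ‖Matrix.diagonal d‖ ≤ c := by
  refine opNorm_le_of _ hc fun x => ?_
  have hx : Matrix.toEuclideanLin (Matrix.diagonal d) x =
      (WithLp.equiv 2 (Fin k → ℂ)).symm (fun i => d i * x i) := by
    rw [Matrix.toEuclideanLin_apply]
    congr 1
    ext i
    simp [Matrix.mulVec_diagonal]
  rw [hx]
  rw [EuclideanSpace.norm_eq, EuclideanSpace.norm_eq]
  simp only [WithLp.equiv_symm_apply, PiLp.toLp_apply]
  have h1 : ∀ i ∈ Finset.univ, ‖d i * x i‖^2 ≤ c^2 * ‖x i‖^2 := fun i _ => by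
    rw [norm_mul, mul_pow]
    exact mul_le_mul_of_nonneg_right (pow_le_pow_left₀ (norm_nonneg _) (h i) 2) (sq_nonneg _)
  calc Real.sqrt (∑ i, ‖d i * x i‖^2) ≤ Real.sqrt (∑ i, c^2*‖x i‖^2) :=
        Real.sqrt_le_sqrt (Finset.sum_le_sum h1)
    _ = c * Real.sqrt (∑ i, ‖x i‖^2) := by
        rw [← Finset.mul_sum, Real.sqrt_mul (sq_nonneg c), Real.sqrt_sq hc]

lemma isometry_mulVec {a b : ℕ} {W : Matrix (Fin a) (Fin b) ℂ} (hW : Wᴴ * W = 1)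
    (x : EuclideanSpace ℂ (Fin b)) : ‖Matrix.toEuclideanLin W x‖ = ‖x‖ := by
  have key : (inner ℂ (Matrix.toEuclideanLin W x) (Matrix.toEuclideanLin W x) : ℂ) = inner ℂ x x := by
    rw [EuclideanSpace.inner_eq_star_dotProduct, EuclideanSpace.inner_eq_star_dotProduct]
    simp only [Matrix.toEuclideanLin_apply, WithLp.ofLp_toLp]
    rw [Matrix.star_mulVec, dotProduct_comm, Matrix.dotProduct_mulVec, Matrix.vecMul_vecMul, hW,
      Matrix.vecMul_one, dotProduct_comm]
  rw [inner_self_eq_norm_sq_to_K, inner_self_eq_norm_sq_to_K] at key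
  have key' : ‖Matrix.toEuclideanLin W x‖ ^ 2 = ‖x‖ ^ 2 := by exact_mod_cast key
  nlinarith [norm_nonneg (Matrix.toEuclideanLin W x), norm_nonneg x]

lemma isometry_norm_le_one {a b : ℕ} {W : Matrix (Fin a) (Fin b) ℂ} (hW : Wᴴ * W = 1) :
    ‖W‖ ≤ 1 := by
  refine opNorm_le_of _ zero_le_one fun x => ?_
  rw [isometry_mulVec hW x, one_mul]

/-- Let `m ≥ n ≥ 1`, let `V ∈ ℂ^{m×n}` with `V*V = I`, and let `D ∈ ℂ^{m×m}` be
diagonal with `‖D‖₂ < 1`. If `Q` is the orthonormal polar factor of `(I+D)V` (that is, `Q*Q = I`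
and `QH = (I+D)V` with `H` Hermitian positive semidefinite), then for every `A ∈ ℂ^{m×m}`,
`‖V*AV − Q*AQ‖₂ ≤ 4‖A‖₂‖D‖₂/(1 − ‖D‖₂)`. -/
theorem polar_projection_bound (m n : ℕ) (hn : 1 ≤ n) (hmn : n ≤ m)
    (V : Matrix (Fin m) (Fin n) ℂ) (hV : Vᴴ * V = 1)
    (D : Matrix (Fin m) (Fin m) ℂ) (hD : D.IsDiag) (hDnorm : specNorm D < 1)
    (Q : Matrix (Fin m) (Fin n) ℂ) (hQ : Qᴴ * Q = 1)
    (H : Matrix (Fin n) (Fin n) ℂ) (hH : H.PosSemidef) (hpolar : Q * H = (1 + D) * V)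
    (A : Matrix (Fin m) (Fin m) ℂ) :
    specNorm (Vᴴ * A * V - Qᴴ * A * Q) ≤
      4 * specNorm A * specNorm D / (1 - specNorm D) := by
  classical
  simp only [specNorm_eq] at hDnorm ⊢
  have hδ0 : (0:ℝ) ≤ ‖D‖ := norm_nonneg _
  have h1δ : (0:ℝ) < 1 - ‖D‖ := by linarith
  have hVnorm : ‖V‖ ≤ 1 := isometry_norm_le_one hV
  have hQnorm : ‖Q‖ ≤ 1 := isometry_norm_le_one hQ
  have hHherm : H.IsHermitian := hH.1
  set lam := hHherm.eigenvalues with hlam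
  set U : Matrix (Fin n) (Fin n) ℂ := (hHherm.eigenvectorUnitary : Matrix (Fin n) (Fin n) ℂ)
    with hUdef
  have hUU : Uᴴ * U = 1 := by
    have := hHherm.eigenvectorUnitary.2
    rw [Unitary.mem_iff] at this
    simpa [Matrix.star_eq_conjTranspose] using this.1
  have hUU' : U * Uᴴ = 1 := by
    have := hHherm.eigenvectorUnitary.2
    rw [Unitary.mem_iff] at this
    simpa [Matrix.star_eq_conjTranspose] using this.2
  have hspec : H = U * Matrix.diagonal (RCLike.ofReal ∘ lam) * Uᴴ := by
    simpa [Matrix.star_eq_conjTranspose] using hHherm.spectral_theorem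
  have hDV : ‖D * V‖ ≤ ‖D‖ := by
    calc ‖D * V‖ ≤ ‖D‖ * ‖V‖ := Matrix.l2_opNorm_mul D V
      _ ≤ ‖D‖ * 1 := by exact mul_le_mul_of_nonneg_left hVnorm hδ0
      _ = ‖D‖ := mul_one _
  have h1DV : ‖(1 + D) * V‖ ≤ 1 + ‖D‖ := by
    have he : (1 + D) * V = V + D * V := by rw [Matrix.add_mul, Matrix.one_mul]
    rw [he]
    calc ‖V + D * V‖ ≤ ‖V‖ + ‖D * V‖ := norm_add_le _ _
      _ ≤ 1 + ‖D‖ := add_le_add hVnorm hDV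
  have hHn : ‖H‖ ≤ 1 + ‖D‖ := by
    have h2 : H = Qᴴ * (Q * H) := by rw [← Matrix.mul_assoc, hQ, Matrix.one_mul]
    calc ‖H‖ = ‖Qᴴ * (Q * H)‖ := by rw [← h2]
      _ ≤ ‖Qᴴ‖ * ‖Q * H‖ := Matrix.l2_opNorm_mul _ _
      _ ≤ 1 * (1 + ‖D‖) := by
          rw [Matrix.l2_opNorm_conjTranspose]
          exact mul_le_mul hQnorm (hpolar ▸ h1DV) (norm_nonneg _) zero_le_one
      _ = 1 + ‖D‖ := one_mul _
  have hlam_bounds : ∀ i, 1 - ‖D‖ ≤ lam i ∧ lam i ≤ 1 + ‖D‖ := by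
    intro i
    set v : EuclideanSpace ℂ (Fin n) := hHherm.eigenvectorBasis i with hv
    have hv1 : ‖v‖ = 1 := hHherm.eigenvectorBasis.orthonormal.1 i
    have hEv : Matrix.toEuclideanLin H v = (lam i : ℝ) • v := by
      rw [Matrix.toEuclideanLin_apply, hHherm.mulVec_eigenvectorBasis i]; rfl
    have hnormHv : ‖Matrix.toEuclideanLin H v‖ = |lam i| := by
      rw [hEv, norm_smul, Real.norm_eq_abs, hv1, mul_one]
    have hupper : |lam i| ≤ 1 + ‖D‖ := by
      rw [← hnormHv]
      calc ‖Matrix.toEuclideanLin H v‖ ≤ ‖H‖ * ‖v‖ := le_opNorm_mulVec H v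
        _ = ‖H‖ := by rw [hv1, mul_one]
        _ ≤ 1 + ‖D‖ := hHn
    have hQHv : Matrix.toEuclideanLin (Q * H) v
        = (lam i : ℝ) • (Matrix.toEuclideanLin Q v) := by
      have hcomp : Matrix.toEuclideanLin (Q * H) v
          = Matrix.toEuclideanLin Q (Matrix.toEuclideanLin H v) := by
        simp only [Matrix.toEuclideanLin_apply, WithLp.ofLp_toLp]
        rw [Matrix.mulVec_mulVec]
      rw [hcomp, hEv, LinearMap.map_smul_of_tower]
    have hnormQHv : ‖Matrix.toEuclideanLin (Q * H) v‖ = |lam i| := by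
      rw [hQHv, norm_smul, Real.norm_eq_abs, isometry_mulVec hQ v, hv1, mul_one]
    have hlower : 1 - ‖D‖ ≤ |lam i| := by
      rw [← hnormQHv, hpolar]
      have hsplit : Matrix.toEuclideanLin ((1 + D) * V) v
          = Matrix.toEuclideanLin V v + Matrix.toEuclideanLin (D * V) v := by
        have he : (1 + D) * V = V + D * V := by rw [Matrix.add_mul, Matrix.one_mul]
        rw [he, map_add, LinearMap.add_apply]
      rw [hsplit]
      have h1 : ‖Matrix.toEuclideanLin V v‖ = 1 := by rw [isometry_mulVec hV v, hv1]
      have h2 : ‖Matrix.toEuclideanLin (D * V) v‖ ≤ ‖D‖ := by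
        calc ‖Matrix.toEuclideanLin (D * V) v‖ ≤ ‖D * V‖ * ‖v‖ := le_opNorm_mulVec _ _
          _ ≤ ‖D‖ := by rw [hv1, mul_one]; exact hDV
      have h3 : ‖Matrix.toEuclideanLin V v‖ ≤
          ‖Matrix.toEuclideanLin V v + Matrix.toEuclideanLin (D * V) v‖
            + ‖Matrix.toEuclideanLin (D * V) v‖ := by
        have := norm_add_le (Matrix.toEuclideanLin V v + Matrix.toEuclideanLin (D * V) v)
          (-(Matrix.toEuclideanLin (D * V) v))
        simpa using this
      linarith
    have hnn : 0 ≤ lam i := hH.eigenvalues_nonneg i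
    rw [abs_of_nonneg hnn] at hlower hupper
    exact ⟨hlower, hupper⟩
  have hlamne : ∀ i, (lam i : ℂ) ≠ 0 := fun i => by
    have := (hlam_bounds i).1
    exact_mod_cast ne_of_gt (by linarith : (0:ℝ) < lam i)
  set J : Matrix (Fin n) (Fin n) ℂ := U * Matrix.diagonal (fun i => (lam i : ℂ)⁻¹) * Uᴴ with hJdef
  have hHJ : H * J = 1 := by
    rw [hspec, hJdef]
    have e1 : U * Matrix.diagonal (RCLike.ofReal ∘ lam) * Uᴴ
        * (U * Matrix.diagonal (fun i => (lam i : ℂ)⁻¹) * Uᴴ)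
        = U * (Matrix.diagonal (RCLike.ofReal ∘ lam) * (Uᴴ * U)
            * Matrix.diagonal (fun i => (lam i : ℂ)⁻¹)) * Uᴴ := by
      simp only [Matrix.mul_assoc]
    rw [e1, hUU, Matrix.mul_one, Matrix.diagonal_mul_diagonal]
    have e2 : (fun i => (RCLike.ofReal ∘ lam) i * (lam i : ℂ)⁻¹) = fun _ => (1:ℂ) := by
      funext i
      exact mul_inv_cancel₀ (hlamne i)
    rw [e2, Matrix.diagonal_one, Matrix.mul_one, hUU']
  have hUnorm : ‖U‖ ≤ 1 := isometry_norm_le_one hUU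
  have hUHnorm : ‖Uᴴ‖ ≤ 1 := by rw [Matrix.l2_opNorm_conjTranspose]; exact hUnorm
  have hconj3 : ∀ (B : Matrix (Fin n) (Fin n) ℂ) (c : ℝ), 0 ≤ c → ‖B‖ ≤ c →
      ‖U * B * Uᴴ‖ ≤ c := by
    intro B c hc hB
    calc ‖U * B * Uᴴ‖ ≤ ‖U * B‖ * ‖Uᴴ‖ := Matrix.l2_opNorm_mul _ _
      _ ≤ (‖U‖ * ‖B‖) * ‖Uᴴ‖ := by
          exact mul_le_mul_of_nonneg_right (Matrix.l2_opNorm_mul _ _) (norm_nonneg _)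
      _ ≤ (1 * c) * 1 := by
          have h0 : 0 ≤ ‖U‖ * ‖B‖ := mul_nonneg (norm_nonneg _) (norm_nonneg _)
          exact mul_le_mul (mul_le_mul hUnorm hB (norm_nonneg _) zero_le_one) hUHnorm
            (norm_nonneg _) (by linarith)
      _ = c := by ring
  have hJnorm : ‖J‖ ≤ (1 - ‖D‖)⁻¹ := by
    rw [hJdef]
    refine hconj3 _ _ (by positivity) ?_
    refine diag_norm_le _ (by positivity) fun i => ?_
    rw [show ((lam i : ℂ))⁻¹ = ((lam i)⁻¹ : ℝ) by push_cast; ring]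
    rw [Complex.norm_real, Real.norm_eq_abs,
      abs_of_nonneg (inv_nonneg.mpr (by linarith [(hlam_bounds i).1]))]
    exact inv_anti₀ h1δ (hlam_bounds i).1
  have hHm1 : ‖H - 1‖ ≤ ‖D‖ := by
    have e1 : H - 1 = U * (Matrix.diagonal (RCLike.ofReal ∘ lam) - 1) * Uᴴ := by
      rw [Matrix.mul_sub, Matrix.sub_mul, Matrix.mul_one, hUU', ← hspec]
    rw [e1]
    refine hconj3 _ _ hδ0 ?_
    have e2 : Matrix.diagonal (RCLike.ofReal ∘ lam) - 1
        = Matrix.diagonal (fun i => (lam i : ℂ) - 1) := by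
      rw [← Matrix.diagonal_one, Matrix.diagonal_sub]
      rfl
    rw [e2]
    refine diag_norm_le _ hδ0 fun i => ?_
    rw [show ((lam i : ℂ)) - 1 = ((lam i - 1 : ℝ) : ℂ) by push_cast; ring]
    rw [Complex.norm_real, Real.norm_eq_abs]
    have := hlam_bounds i
    rw [abs_le]
    constructor <;> linarith [this.1, this.2]
  have hfac : V * (H - 1) - D * V = (V - Q) * H := by
    rw [Matrix.sub_mul V Q, hpolar, Matrix.mul_sub, Matrix.mul_one, Matrix.add_mul,
      Matrix.one_mul]
    abel
  have hVQ : V - Q = (V * (H - 1) - D * V) * J := by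
    rw [hfac, Matrix.mul_assoc, hHJ, Matrix.mul_one]
  have hVQn : ‖V - Q‖ ≤ 2 * ‖D‖ * (1 - ‖D‖)⁻¹ := by
    rw [hVQ]
    calc ‖(V * (H - 1) - D * V) * J‖ ≤ ‖V * (H - 1) - D * V‖ * ‖J‖ := Matrix.l2_opNorm_mul _ _
      _ ≤ (2 * ‖D‖) * (1 - ‖D‖)⁻¹ := by
          refine mul_le_mul ?_ hJnorm (norm_nonneg _) (by positivity)
          calc ‖V * (H - 1) - D * V‖ ≤ ‖V * (H - 1)‖ + ‖D * V‖ := norm_sub_le _ _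
            _ ≤ ‖V‖ * ‖H - 1‖ + ‖D‖ := add_le_add (Matrix.l2_opNorm_mul _ _) hDV
            _ ≤ 1 * ‖D‖ + ‖D‖ := by
                refine add_le_add_left ?_ _
                exact mul_le_mul hVnorm hHm1 (norm_nonneg _) zero_le_one
            _ = 2 * ‖D‖ := by ring
  have hkey : Vᴴ * A * V - Qᴴ * A * Q = Vᴴ * A * (V - Q) + (V - Q)ᴴ * (A * Q) := by
    rw [Matrix.conjTranspose_sub, Matrix.mul_sub, Matrix.sub_mul,
      ← Matrix.mul_assoc, ← Matrix.mul_assoc]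
    abel
  rw [hkey]
  have hb1 : ‖Vᴴ * A * (V - Q)‖ ≤ ‖A‖ * (2 * ‖D‖ * (1 - ‖D‖)⁻¹) := by
    calc ‖Vᴴ * A * (V - Q)‖ ≤ ‖Vᴴ * A‖ * ‖V - Q‖ := Matrix.l2_opNorm_mul _ _
      _ ≤ ‖A‖ * (2 * ‖D‖ * (1 - ‖D‖)⁻¹) := by
          refine mul_le_mul ?_ hVQn (norm_nonneg _) (norm_nonneg _)
          calc ‖Vᴴ * A‖ ≤ ‖Vᴴ‖ * ‖A‖ := Matrix.l2_opNorm_mul _ _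
            _ ≤ 1 * ‖A‖ := by
                rw [Matrix.l2_opNorm_conjTranspose]
                exact mul_le_mul_of_nonneg_right hVnorm (norm_nonneg _)
            _ = ‖A‖ := one_mul _
  have hb2 : ‖(V - Q)ᴴ * (A * Q)‖ ≤ (2 * ‖D‖ * (1 - ‖D‖)⁻¹) * ‖A‖ := by
    calc ‖(V - Q)ᴴ * (A * Q)‖ ≤ ‖(V - Q)ᴴ‖ * ‖A * Q‖ := Matrix.l2_opNorm_mul _ _
      _ ≤ (2 * ‖D‖ * (1 - ‖D‖)⁻¹) * ‖A‖ := by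
          rw [Matrix.l2_opNorm_conjTranspose]
          refine mul_le_mul hVQn ?_ (norm_nonneg _) (by positivity)
          calc ‖A * Q‖ ≤ ‖A‖ * ‖Q‖ := Matrix.l2_opNorm_mul _ _
            _ ≤ ‖A‖ * 1 := mul_le_mul_of_nonneg_left hQnorm (norm_nonneg _)
            _ = ‖A‖ := mul_one _
  calc ‖Vᴴ * A * (V - Q) + (V - Q)ᴴ * (A * Q)‖
      ≤ ‖Vᴴ * A * (V - Q)‖ + ‖(V - Q)ᴴ * (A * Q)‖ := norm_add_le _ _
    _ ≤ ‖A‖ * (2 * ‖D‖ * (1 - ‖D‖)⁻¹) + (2 * ‖D‖ * (1 - ‖D‖)⁻¹) * ‖A‖ := add_le_add hb1 hb2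
    _ = 4 * ‖A‖ * ‖D‖ / (1 - ‖D‖) := by
        rw [div_eq_mul_inv]
        ring
end
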